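/- Let G be a cactus on n vertices in which every cycle is a triangle (length 3), with t triangles and m cut edges (so n = 2t + m + 1). Then PI(G) = (n-1)(n-2) - 2t. -/

import Mathlib

open SimpleGraph Finset
open scoped Classical

variable {V : Type*}

/-- Number of vertices strictly closer to `x` than to `y` (excluding `x` and `y`). -/
noncomputable def nclose (G : SimpleGraph V) (x y : V) : ℕ :=
  Nat.card {w : V | w ≠ x ∧ w ≠ y ∧ G.dist w x < G.dist w y}

/-- The contribution `PI(e) = n_{xy}(x) + n_{xy}(y)` of an edge. -/
noncomputable def PIedge (G : SimpleGraph V) : Sym2 V → ℕ :=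
  Sym2.lift ⟨fun x y => nclose G x y + nclose G y x, fun _ _ => add_comm _ _⟩

/-- The vertex PI index of a graph. -/
noncomputable def PI [Fintype V] (G : SimpleGraph V) : ℕ :=
  ∑ e ∈ G.edgeFinset, PIedge G e

/-- A cactus: connected, and any two cycles share at most one vertex. -/
def IsCactus (G : SimpleGraph V) : Prop :=
  G.Connected ∧ ∀ (u v : V) (c₁ : G.Walk u u) (c₂ : G.Walk v v),
    c₁.IsCycle → c₂.IsCycle → {e | e ∈ c₁.edges} ≠ {e | e ∈ c₂.edges} →
    Set.ncard {x | x ∈ c₁.support ∧ x ∈ c₂.support} ≤ 1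
/-- The number of cycles of a graph, counted as edge sets of cycles. -/
noncomputable def numCycles (G : SimpleGraph V) : ℕ :=
  Set.ncard {s : Set (Sym2 V) |
    ∃ (v : V) (c : G.Walk v v), c.IsCycle ∧ s = {e | e ∈ c.edges}}

/-- The number of cut edges (bridges) of a graph. -/
noncomputable def numCutEdges (G : SimpleGraph V) : ℕ :=
  Set.ncard {e : Sym2 V | G.IsBridge e}
variable {G : SimpleGraph V}

lemma dist_step (hc : G.Connected) {x y : V} (h : G.Adj x y) (w : V) :
    G.dist w y ≤ G.dist w x + 1 := by
  have := hc.dist_triangle (u := w) (v := x) (w := y)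
  rwa [(SimpleGraph.dist_eq_one_iff_adj).2 h] at this

lemma support_dist {w x z : V} (p : G.Walk w x) (hz : z ∈ p.support) :
    G.dist w z + G.dist z x ≤ p.length := by
  have h1 := SimpleGraph.dist_le (p.takeUntil z hz)
  have h2 := SimpleGraph.dist_le (p.dropUntil z hz)
  have h3 := congr_arg SimpleGraph.Walk.length (p.take_spec hz)
  rw [SimpleGraph.Walk.length_append] at h3
  omega

/-- if `d(w,x) ≤ d(w,y)` and `y ≠ x` then `y` is not on a shortest `w→x` walk. -/
lemma not_mem_shortest (hc : G.Connected) {w x y : V} (hyx : y ≠ x)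
    (hd : G.dist w x ≤ G.dist w y) (p : G.Walk w x) (hp : p.length = G.dist w x) :
    y ∉ p.support := by
  intro hy
  have h1 := support_dist p hy
  have h2 := hc.pos_dist_of_ne hyx
  omega

lemma two_mem_cactus (hG : IsCactus G) {u v : V} {c₁ : G.Walk u u} {c₂ : G.Walk v v}
    (h₁ : c₁.IsCycle) (h₂ : c₂.IsCycle) {e : Sym2 V}
    (he₁ : e ∈ c₁.edges) (he₂ : e ∈ c₂.edges) :
    {e | e ∈ c₁.edges} = {e | e ∈ c₂.edges} := by
  by_contra hne
  have hle := hG.2 u v c₁ c₂ h₁ h₂ hne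
  induction e with
  | h a b =>
    have hab : a ≠ b := (c₁.adj_of_mem_edges he₁).ne
    have hsub : ({a, b} : Set V) ⊆ {x | x ∈ c₁.support ∧ x ∈ c₂.support} := by
      rintro x (rfl | rfl)
      · exact ⟨c₁.fst_mem_support_of_mem_edges he₁, c₂.fst_mem_support_of_mem_edges he₂⟩
      · exact ⟨c₁.snd_mem_support_of_mem_edges he₁, c₂.snd_mem_support_of_mem_edges he₂⟩
    have : ({a, b} : Set V).ncard ≤ 1 :=
      le_trans (Set.ncard_le_ncard hsub ((c₁.support.finite_toSet).subset (fun x hx => hx.1))) hle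
    rw [Set.ncard_pair hab] at this
    omega

/-- structure of a length-2 path. -/
lemma length_two_walk {x y : V} (p : G.Walk x y) (hp : p.length = 2) :
    ∃ z, ∃ (h1 : G.Adj x z) (h2 : G.Adj z y),
      p = SimpleGraph.Walk.cons h1 (SimpleGraph.Walk.cons h2 SimpleGraph.Walk.nil) := by
  cases p with
  | nil => simp at hp
  | cons h1 q =>
    cases q with
    | nil => simp at hp
    | cons h2 r =>
      cases r with
      | nil => exact ⟨_, h1, h2, rfl⟩
      | cons h3 s => simp [SimpleGraph.Walk.length_cons] at hp
/-- The family of cycle edge-sets. -/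
def TriFam (G : SimpleGraph V) : Set (Set (Sym2 V)) :=
  {s : Set (Sym2 V) | ∃ (v : V) (c : G.Walk v v), c.IsCycle ∧ s = {e | e ∈ c.edges}}

lemma tri_mem_TriFam {x y z : V} (hxy : G.Adj x y) (hyz : G.Adj y z) (hzx : G.Adj z x) :
    ({s(x,y), s(y,z), s(z,x)} : Set (Sym2 V)) ∈ TriFam G := by
  refine ⟨x, SimpleGraph.Walk.cons hxy (SimpleGraph.Walk.cons hyz
    (SimpleGraph.Walk.cons hzx SimpleGraph.Walk.nil)), ?_, ?_⟩
  · rw [SimpleGraph.Walk.cons_isCycle_iff]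
    constructor
    · simp [SimpleGraph.Walk.isPath_def, hxy.ne, hyz.ne, hzx.ne, hzx.ne.symm, hxy.ne.symm, hyz.ne.symm]
    · simp [Sym2.eq_iff, hxy.ne, hyz.ne, hzx.ne, hzx.ne.symm, hxy.ne', hyz.ne']
  · ext e
    simp [Sym2.eq_swap]
lemma trifam_unique (hG : IsCactus G) {S₁ S₂ : Set (Sym2 V)} (h₁ : S₁ ∈ TriFam G)
    (h₂ : S₂ ∈ TriFam G) {e : Sym2 V} (he₁ : e ∈ S₁) (he₂ : e ∈ S₂) : S₁ = S₂ := by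
  obtain ⟨u, c₁, hc₁, rfl⟩ := h₁
  obtain ⟨v, c₂, hc₂, rfl⟩ := h₂
  exact two_mem_cactus hG hc₁ hc₂ he₁ he₂

lemma exists_third (hG : IsCactus G)
    (hlen : ∀ (v : V) (c : G.Walk v v), c.IsCycle → c.length = 3)
    {x y w : V} (hxy : G.Adj x y) (hwx : w ≠ x) (hwy : w ≠ y)
    (hd : G.dist w x = G.dist w y) :
    ∃ z, z ≠ x ∧ z ≠ y ∧ G.Adj y z ∧ G.Adj z x ∧ G.dist w z + 1 = G.dist w x := by
  have hc := hG.1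
  obtain ⟨p, hp⟩ := SimpleGraph.Connected.exists_walk_length_eq_dist hc w x
  obtain ⟨q, hq⟩ := SimpleGraph.Connected.exists_walk_length_eq_dist hc w y
  have hyp : y ∉ p.support := not_mem_shortest hc hxy.ne' (le_of_eq hd) p hp
  have hxq : x ∉ q.support := not_mem_shortest hc hxy.ne (le_of_eq hd.symm) q hq
  set W : G.Walk x y := p.reverse.append q with hW
  have hWe : s(x,y) ∉ W.edges := by
    intro h
    rw [SimpleGraph.Walk.edges_append, List.mem_append] at h
    rcases h with h | h
    · rw [SimpleGraph.Walk.edges_reverse, List.mem_reverse] at h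
      exact hyp (p.snd_mem_support_of_mem_edges h)
    · exact hxq (q.fst_mem_support_of_mem_edges h)
  set c : G.Walk y y := SimpleGraph.Walk.cons hxy.symm W.bypass with hcdef
  have hcyc : c.IsCycle := by
    rw [hcdef, SimpleGraph.Walk.cons_isCycle_iff]
    refine ⟨W.bypass_isPath, fun h => hWe ?_⟩
    rw [Sym2.eq_swap] at h
    exact W.edges_bypass_subset h
  have hlen3 : W.bypass.length = 2 := by
    have := hlen y c hcyc
    rw [hcdef, SimpleGraph.Walk.length_cons] at this
    omega
  obtain ⟨z, h1, h2, hb⟩ := length_two_walk W.bypass hlen3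
  have hpath := W.bypass_isPath
  rw [hb] at hpath
  have hsup : W.bypass.support = [x, z, y] := by rw [hb]; simp
  have hzx : z ≠ x := by
    intro h; subst h
    simp [SimpleGraph.Walk.isPath_def] at hpath
  have hzy : z ≠ y := by
    intro h; subst h
    simp [SimpleGraph.Walk.isPath_def] at hpath
  have hzW : z ∈ W.support := W.support_bypass_subset (by rw [hsup]; simp)
  have hzpq : z ∈ p.support ∨ z ∈ q.support := by
    rw [hW, SimpleGraph.Walk.mem_support_append_iff] at hzW
    rcases hzW with h | h
    · left; rwa [SimpleGraph.Walk.support_reverse, List.mem_reverse] at h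
    · right; exact h
  have hdzx : G.dist w x ≤ G.dist w z + 1 := dist_step hc h1.symm w
  have hdzy : G.dist w y ≤ G.dist w z + 1 := dist_step hc h2 w
  have hfin : G.dist w z + 1 = G.dist w x := by
    rcases hzpq with h | h
    · have h5 := support_dist p h
      have h6 := hc.pos_dist_of_ne hzx
      omega
    · have h5 := support_dist q h
      have h6 := hc.pos_dist_of_ne hzy
      omega
  exact ⟨z, hzx, hzy, h2.symm, h1.symm, hfin⟩
lemma third_dist (hG : IsCactus G)
    (hlen : ∀ (v : V) (c : G.Walk v v), c.IsCycle → c.length = 3)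
    {x y z w : V} (hxy : G.Adj x y) (hyz : G.Adj y z) (hzx : G.Adj z x)
    (hwx : w ≠ x) (hwy : w ≠ y) (hd : G.dist w x = G.dist w y) :
    G.dist w z + 1 = G.dist w x := by
  by_cases hwz : w = z
  · subst hwz
    rw [SimpleGraph.dist_self, SimpleGraph.dist_eq_one_iff_adj.2 hzx]
  obtain ⟨z', hz'x, hz'y, hyz', hz'x', hdist⟩ := exists_third hG hlen hxy hwx hwy hd
  have hT : ({s(x,y), s(y,z), s(z,x)} : Set (Sym2 V)) ∈ TriFam G :=
    tri_mem_TriFam hxy hyz hzx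
  have hT' : ({s(x,y), s(y,z'), s(z',x)} : Set (Sym2 V)) ∈ TriFam G :=
    tri_mem_TriFam hxy hyz' hz'x'
  have hTT' := trifam_unique hG hT' hT (by left; rfl) (by left; rfl)
  have hmem : s(y,z') ∈ ({s(x,y), s(y,z), s(z,x)} : Set (Sym2 V)) := by
    rw [← hTT']; right; left; rfl
  simp only [Set.mem_insert_iff, Set.mem_singleton_iff] at hmem
  have hz'z : z' = z := by
    rcases hmem with h | h | h <;> rw [Sym2.eq_iff] at h <;>
      rcases h with ⟨h1, h2⟩ | ⟨h1, h2⟩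
    · exact absurd h1 hxy.ne'
    · exact absurd h2 hz'x
    · exact h2
    · exact absurd h1 hyz.ne
    · exact absurd h1 hyz.ne
    · exact absurd h1 hxy.ne'
  rwa [hz'z] at hdist
lemma tri_exactly_one (hG : IsCactus G)
    (hlen : ∀ (v : V) (c : G.Walk v v), c.IsCycle → c.length = 3)
    {x y z : V} (hxy : G.Adj x y) (hyz : G.Adj y z) (hzx : G.Adj z x) (w : V) :
    ((w ≠ x ∧ w ≠ y ∧ G.dist w x = G.dist w y) ∧
      ¬(w ≠ y ∧ w ≠ z ∧ G.dist w y = G.dist w z) ∧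
      ¬(w ≠ z ∧ w ≠ x ∧ G.dist w z = G.dist w x)) ∨
    (¬(w ≠ x ∧ w ≠ y ∧ G.dist w x = G.dist w y) ∧
      (w ≠ y ∧ w ≠ z ∧ G.dist w y = G.dist w z) ∧
      ¬(w ≠ z ∧ w ≠ x ∧ G.dist w z = G.dist w x)) ∨
    (¬(w ≠ x ∧ w ≠ y ∧ G.dist w x = G.dist w y) ∧
      ¬(w ≠ y ∧ w ≠ z ∧ G.dist w y = G.dist w z) ∧
      (w ≠ z ∧ w ≠ x ∧ G.dist w z = G.dist w x)) := by
  have hc := hG.1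
  have h1 : (w ≠ x ∧ w ≠ y ∧ G.dist w x = G.dist w y) →
      G.dist w z + 1 = G.dist w x ∧ G.dist w x = G.dist w y :=
    fun ⟨h, h', hd⟩ => ⟨third_dist hG hlen hxy hyz hzx h h' hd, hd⟩
  have h2 : (w ≠ y ∧ w ≠ z ∧ G.dist w y = G.dist w z) →
      G.dist w x + 1 = G.dist w y ∧ G.dist w y = G.dist w z :=
    fun ⟨h, h', hd⟩ => ⟨third_dist hG hlen hyz hzx hxy h h' hd, hd⟩
  have h3 : (w ≠ z ∧ w ≠ x ∧ G.dist w z = G.dist w x) →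
      G.dist w y + 1 = G.dist w z ∧ G.dist w z = G.dist w x :=
    fun ⟨h, h', hd⟩ => ⟨third_dist hG hlen hzx hxy hyz h h' hd, hd⟩
  have h4 : (w ≠ x ∧ w ≠ y ∧ G.dist w x = G.dist w y) ∨
      (w ≠ y ∧ w ≠ z ∧ G.dist w y = G.dist w z) ∨
      (w ≠ z ∧ w ≠ x ∧ G.dist w z = G.dist w x) := by
    by_cases hwx : w = x
    · subst hwx
      exact Or.inr (Or.inl ⟨hxy.ne, hzx.symm.ne,
        by rw [SimpleGraph.dist_eq_one_iff_adj.2 hxy, SimpleGraph.dist_eq_one_iff_adj.2 hzx.symm]⟩)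
    by_cases hwy : w = y
    · subst hwy
      exact Or.inr (Or.inr ⟨hyz.ne, hxy.ne', by
        rw [SimpleGraph.dist_eq_one_iff_adj.2 hyz, SimpleGraph.dist_eq_one_iff_adj.2 hxy.symm]⟩)
    by_cases hwz : w = z
    · subst hwz
      exact Or.inl ⟨hzx.ne, hyz.ne', by
        rw [SimpleGraph.dist_eq_one_iff_adj.2 hzx, SimpleGraph.dist_eq_one_iff_adj.2 hyz.symm]⟩
    · have e1 := dist_step hc hxy w
      have e2 := dist_step hc hxy.symm w
      have e3 := dist_step hc hyz w
      have e4 := dist_step hc hyz.symm w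
      have e5 := dist_step hc hzx w
      have e6 := dist_step hc hzx.symm w
      by_cases hab : G.dist w x = G.dist w y
      · exact Or.inl ⟨hwx, hwy, hab⟩
      by_cases hbc : G.dist w y = G.dist w z
      · exact Or.inr (Or.inl ⟨hwy, hwz, hbc⟩)
      by_cases hca : G.dist w z = G.dist w x
      · exact Or.inr (Or.inr ⟨hwz, hwx, hca⟩)
      · omega
  rcases h4 with h | h | h
  · exact Or.inl ⟨h, fun h' => by have := h1 h; have := h2 h'; omega,
      fun h' => by have := h1 h; have := h3 h'; omega⟩
  · exact Or.inr (Or.inl ⟨fun h' => by have := h1 h'; have := h2 h; omega, h,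
      fun h' => by have := h2 h; have := h3 h'; omega⟩)
  · exact Or.inr (Or.inr ⟨fun h' => by have := h1 h'; have := h3 h; omega,
      fun h' => by have := h2 h'; have := h3 h; omega, h⟩)
/-- equidistance predicate on edges -/
def eqd (G : SimpleGraph V) (w : V) : Sym2 V → Prop :=
  Sym2.lift ⟨fun a b => G.dist w a = G.dist w b, fun a b => propext ⟨Eq.symm, Eq.symm⟩⟩

@[simp] lemma eqd_mk (w a b : V) : eqd G w s(a,b) ↔ (G.dist w a = G.dist w b) := Iff.rfl

@[simp] lemma PIedge_mk (x y : V) : PIedge G s(x,y) = nclose G x y + nclose G y x := rfl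

lemma nclose_eq [Fintype V] (x y : V) :
    nclose G x y =
      (Finset.univ.filter fun w => w ≠ x ∧ w ≠ y ∧ G.dist w x < G.dist w y).card := by
  rw [nclose, Nat.card_coe_set_eq, Set.ncard_eq_toFinset_card', Set.toFinset_setOf]

lemma dc {α β : Type*} (s : Finset α) (t : Finset β) (R : α → β → Prop)
    [∀ a, DecidablePred (R a)] [∀ b : β, DecidablePred (fun a => R a b)] :
    ∑ a ∈ s, (t.filter (R a)).card = ∑ b ∈ t, (s.filter (fun a => R a b)).card := by
  simp_rw [Finset.card_filter]
  rw [Finset.sum_comm]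

lemma edge_contrib [Fintype V] {x y : V} (hxy : G.Adj x y) :
    PIedge G s(x,y) +
      (Finset.univ.filter fun w => w ∉ s(x,y) ∧ eqd G w s(x,y)).card
      = Fintype.card V - 2 := by
  classical
  set A := Finset.univ.filter fun w : V => w ≠ x ∧ w ≠ y with hA
  have cardA : A.card = Fintype.card V - 2 := by
    have : A = Finset.univ \ {x, y} := by
      ext w; simp [hA, and_comm]
    rw [this, Finset.card_sdiff_of_subset (by simp)]
    simp [Finset.card_insert_of_notMem, hxy.ne]
  have hsplit : A.card = (A.filter fun w => G.dist w x < G.dist w y).card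
      + (A.filter fun w => G.dist w y < G.dist w x).card
      + (A.filter fun w => G.dist w x = G.dist w y).card := by
    have h : ∀ w ∈ A, (1:ℕ) = (if G.dist w x < G.dist w y then 1 else 0)
        + ((if G.dist w y < G.dist w x then 1 else 0)
        + (if G.dist w x = G.dist w y then 1 else 0)) := by
      intro w _; split_ifs <;> omega
    rw [Finset.card_eq_sum_ones A, Finset.sum_congr rfl h, Finset.sum_add_distrib,
      Finset.sum_add_distrib, ← Finset.card_filter, ← Finset.card_filter,
      ← Finset.card_filter]
    ring
  have e1 : (A.filter fun w => G.dist w x < G.dist w y) =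
      Finset.univ.filter fun w => w ≠ x ∧ w ≠ y ∧ G.dist w x < G.dist w y := by
    rw [hA, Finset.filter_filter]; simp_rw [and_assoc]
  have e2 : (A.filter fun w => G.dist w y < G.dist w x) =
      Finset.univ.filter fun w => w ≠ y ∧ w ≠ x ∧ G.dist w y < G.dist w x := by
    rw [hA, Finset.filter_filter]
    refine Finset.filter_congr fun w _ => by tauto
  have e3 : (A.filter fun w => G.dist w x = G.dist w y) =
      Finset.univ.filter fun w => w ∉ s(x,y) ∧ eqd G w s(x,y) := by
    rw [hA, Finset.filter_filter]
    refine Finset.filter_congr fun w _ => by simp [Sym2.mem_iff, not_or, and_assoc]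
  rw [PIedge_mk, nclose_eq, nclose_eq, ← e1, ← e2, ← e3, ← cardA]
  omega
lemma length_three_walk {u : V} (c : G.Walk u u) (h3 : c.length = 3) :
    ∃ a b, ∃ (h1 : G.Adj u a) (h2 : G.Adj a b) (h3 : G.Adj b u),
      c = SimpleGraph.Walk.cons h1 (SimpleGraph.Walk.cons h2
        (SimpleGraph.Walk.cons h3 SimpleGraph.Walk.nil)) := by
  cases c with
  | nil => simp at h3
  | cons h1 q =>
    rw [SimpleGraph.Walk.length_cons] at h3
    obtain ⟨z, h2, h2', hq⟩ := length_two_walk q (by omega)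
    exact ⟨_, _, h1, h2, h2', by rw [hq]⟩

lemma tri_structure (hlen : ∀ (v : V) (c : G.Walk v v), c.IsCycle → c.length = 3)
    {T : Set (Sym2 V)} (hT : T ∈ TriFam G) :
    ∃ x y z, G.Adj x y ∧ G.Adj y z ∧ G.Adj z x ∧ x ≠ z ∧
      T = {s(x,y), s(y,z), s(z,x)} := by
  obtain ⟨u, c, hc, rfl⟩ := hT
  obtain ⟨a, b, h1, h2, h3, hceq⟩ := length_three_walk c (hlen u c hc)
  have hsup : c.support = [u, a, b, u] := by rw [hceq]; simp
  have hnd := hc.2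
  rw [hsup] at hnd
  simp only [List.tail_cons, List.nodup_cons, List.mem_cons] at hnd
  refine ⟨u, a, b, h1, h2, h3, fun h => ?_, ?_⟩
  · exact hnd.2.1 (by simp [h])
  · rw [hceq]
    ext e
    simp [Sym2.eq_swap]
lemma U1 [Fintype V] (hG : IsCactus G)
    (hlen : ∀ (v : V) (c : G.Walk v v), c.IsCycle → c.length = 3)
    {w : V} {e : Sym2 V} (he : e ∈ G.edgeFinset) (hw : w ∉ e) (hq : eqd G w e) :
    (((Set.toFinite (TriFam G)).toFinset).filter (fun T => e ∈ T)).card = 1 := by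
  induction e with
  | h x y =>
    have hxy : G.Adj x y := (SimpleGraph.mem_edgeSet G).1 (SimpleGraph.mem_edgeFinset.1 he)
    rw [Sym2.mem_iff] at hw
    push_neg at hw
    obtain ⟨z, hzx, hzy, hyz, hzx', _⟩ :=
      exists_third hG hlen hxy hw.1 hw.2 hq
    set T : Set (Sym2 V) := {s(x,y), s(y,z), s(z,x)} with hTdef
    have hTmem : T ∈ TriFam G := tri_mem_TriFam hxy hyz hzx'
    have heT : s(x,y) ∈ T := by left; rfl
    rw [Finset.card_eq_one]
    refine ⟨T, ?_⟩
    ext T'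
    simp only [Finset.mem_filter, Set.Finite.mem_toFinset, Finset.mem_singleton]
    constructor
    · rintro ⟨hT', heT'⟩
      exact trifam_unique hG hT' hTmem heT' heT
    · rintro rfl
      exact ⟨hTmem, heT⟩

lemma U2 [Fintype V] (hG : IsCactus G)
    (hlen : ∀ (v : V) (c : G.Walk v v), c.IsCycle → c.length = 3)
    (w : V) {T : Set (Sym2 V)} (hT : T ∈ TriFam G) :
    ((G.edgeFinset.filter (fun e => w ∉ e ∧ eqd G w e)).filter
      (fun e => e ∈ T)).card = 1 := by
  obtain ⟨x, y, z, hxy, hyz, hzx, hxz, rfl⟩ := tri_structure hlen hT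
  have hmemT : ∀ e : Sym2 V, e ∈ ({s(x,y), s(y,z), s(z,x)} : Set (Sym2 V)) ↔
      e = s(x,y) ∨ e = s(y,z) ∨ e = s(z,x) := by
    intro e; simp [Set.mem_insert_iff]
  have key : ∀ (a b : V), G.Adj a b →
      ((w ≠ a ∧ w ≠ b ∧ G.dist w a = G.dist w b) ↔
        (s(a,b) ∈ G.edgeFinset ∧ (w ∉ s(a,b) ∧ eqd G w s(a,b)))) := by
    intro a b hab
    simp [SimpleGraph.mem_edgeFinset, SimpleGraph.mem_edgeSet, hab, Sym2.mem_iff, not_or,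
      and_assoc]
  rcases tri_exactly_one hG hlen hxy hyz hzx w with ⟨hE, hN1, hN2⟩ |
    ⟨hN1, hE, hN2⟩ | ⟨hN1, hN2, hE⟩
  · rw [Finset.card_eq_one]
    refine ⟨s(x,y), ?_⟩
    ext e
    simp only [Finset.mem_filter, Finset.mem_singleton]
    constructor
    · rintro ⟨⟨he, hcond⟩, heT⟩
      rcases (hmemT e).1 heT with rfl | rfl | rfl
      · rfl
      · exact absurd ((key y z hyz).2 ⟨he, hcond⟩) hN1
      · exact absurd ((key z x hzx).2 ⟨he, hcond⟩) hN2
    · rintro rfl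
      have := (key x y hxy).1 hE
      exact ⟨⟨this.1, this.2⟩, (hmemT _).2 (Or.inl rfl)⟩
  · rw [Finset.card_eq_one]
    refine ⟨s(y,z), ?_⟩
    ext e
    simp only [Finset.mem_filter, Finset.mem_singleton]
    constructor
    · rintro ⟨⟨he, hcond⟩, heT⟩
      rcases (hmemT e).1 heT with rfl | rfl | rfl
      · exact absurd ((key x y hxy).2 ⟨he, hcond⟩) hN1
      · rfl
      · exact absurd ((key z x hzx).2 ⟨he, hcond⟩) hN2
    · rintro rfl
      have := (key y z hyz).1 hE
      exact ⟨⟨this.1, this.2⟩, (hmemT _).2 (Or.inr (Or.inl rfl))⟩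
  · rw [Finset.card_eq_one]
    refine ⟨s(z,x), ?_⟩
    ext e
    simp only [Finset.mem_filter, Finset.mem_singleton]
    constructor
    · rintro ⟨⟨he, hcond⟩, heT⟩
      rcases (hmemT e).1 heT with rfl | rfl | rfl
      · exact absurd ((key x y hxy).2 ⟨he, hcond⟩) hN1
      · exact absurd ((key y z hyz).2 ⟨he, hcond⟩) hN2
      · rfl
    · rintro rfl
      have := (key z x hzx).1 hE
      exact ⟨⟨this.1, this.2⟩, (hmemT _).2 (Or.inr (Or.inr rfl))⟩

lemma count_w [Fintype V] (hG : IsCactus G)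
    (hlen : ∀ (v : V) (c : G.Walk v v), c.IsCycle → c.length = 3) (w : V) :
    (G.edgeFinset.filter (fun e => w ∉ e ∧ eqd G w e)).card = numCycles G := by
  classical
  set TriF := (Set.toFinite (TriFam G)).toFinset with hTriF
  have hnum : numCycles G = TriF.card := Set.ncard_eq_toFinset_card _
  set Ew := G.edgeFinset.filter (fun e => w ∉ e ∧ eqd G w e) with hEw
  have h1 : Ew.card = ∑ e ∈ Ew, (TriF.filter (fun T => e ∈ T)).card := by
    rw [Finset.card_eq_sum_ones]
    refine Finset.sum_congr rfl fun e he => ?_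
    rw [hEw, Finset.mem_filter] at he
    exact (U1 hG hlen he.1 he.2.1 he.2.2).symm
  rw [h1, dc]
  have h2 : ∀ T ∈ TriF, (Ew.filter (fun e => e ∈ T)).card = 1 := by
    intro T hTmem
    rw [hTriF, Set.Finite.mem_toFinset] at hTmem
    exact U2 hG hlen w hTmem
  rw [Finset.sum_congr rfl h2, hnum]
  simp
lemma mem_unique_tri [Fintype V] (hG : IsCactus G) {e : Sym2 V} {T : Set (Sym2 V)}
    (hT : T ∈ TriFam G) (he : e ∈ T) :
    (((Set.toFinite (TriFam G)).toFinset).filter (fun S => e ∈ S)).card = 1 := by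
  rw [Finset.card_eq_one]
  refine ⟨T, ?_⟩
  ext T'
  simp only [Finset.mem_filter, Set.Finite.mem_toFinset, Finset.mem_singleton]
  exact ⟨fun ⟨hT', heT'⟩ => trifam_unique hG hT' hT heT' he, fun h => h ▸ ⟨hT, he⟩⟩

lemma edge_count [Fintype V] (hG : IsCactus G)
    (hlen : ∀ (v : V) (c : G.Walk v v), c.IsCycle → c.length = 3) :
    G.edgeFinset.card = numCutEdges G + 3 * numCycles G := by
  classical
  set TriF := (Set.toFinite (TriFam G)).toFinset with hTriF
  have hnum : numCycles G = TriF.card := Set.ncard_eq_toFinset_card _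
  have hsplit := Finset.card_filter_add_card_filter_not
    (s := G.edgeFinset) (p := fun e => G.IsBridge e)
  have hbr : (G.edgeFinset.filter (fun e => G.IsBridge e)).card = numCutEdges G := by
    have : G.edgeFinset.filter (fun e => G.IsBridge e)
        = (Set.toFinite {e : Sym2 V | G.IsBridge e}).toFinset := by
      ext e
      simp only [Finset.mem_filter, Set.Finite.mem_toFinset, Set.mem_setOf_eq,
        SimpleGraph.mem_edgeFinset]
      exact ⟨fun h => h.2, fun h => ⟨by
        cases e with
        | h u v => exact (SimpleGraph.mem_edgeSet G).2 ((h.reachable_iff_adj).1 (hG.1.preconnected u v)), h⟩⟩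
    rw [this, numCutEdges, Set.ncard_eq_toFinset_card]
  set NB := G.edgeFinset.filter (fun e => ¬ G.IsBridge e) with hNB
  have hnb : NB.card = 3 * numCycles G := by
    have h1 : NB.card = ∑ e ∈ NB, (TriF.filter (fun T => e ∈ T)).card := by
      rw [Finset.card_eq_sum_ones]
      refine Finset.sum_congr rfl fun e he => ?_
      rw [hNB, Finset.mem_filter, SimpleGraph.mem_edgeFinset] at he
      obtain ⟨hes, hnbr⟩ := he
      rw [SimpleGraph.isBridge_iff_forall_cycle_notMem hes] at hnbr
      push_neg at hnbr
      obtain ⟨u, c, hc, hec⟩ := hnbr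
      exact (mem_unique_tri hG ⟨u, c, hc, rfl⟩ hec).symm
    rw [h1, dc]
    have h2 : ∀ T ∈ TriF, (NB.filter (fun e => e ∈ T)).card = 3 := by
      intro T hTmem
      rw [hTriF, Set.Finite.mem_toFinset] at hTmem
      obtain ⟨x, y, z, hxy, hyz, hzx, hxz, hTeq⟩ := tri_structure hlen hTmem
      obtain ⟨u, c, hc, hceq⟩ := hTmem
      have hnotbr : ∀ e ∈ T, ¬ G.IsBridge e := by
        intro e heT hbr
        exact hbr.notMem_edges_of_isCycle hc (by rw [hceq] at heT; exact heT)
      have hedge : ∀ e ∈ T, e ∈ G.edgeSet := by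
        intro e heT
        rw [hceq] at heT
        exact c.edges_subset_edgeSet heT
      have : NB.filter (fun e => e ∈ T) = {s(x,y), s(y,z), s(z,x)} := by
        ext e
        simp only [hNB, Finset.mem_filter, SimpleGraph.mem_edgeFinset,
          Finset.mem_insert, Finset.mem_singleton]
        constructor
        · rintro ⟨⟨_, _⟩, heT⟩
          rw [hTeq] at heT
          simpa using heT
        · intro h
          have heT : e ∈ T := by rw [hTeq]; simpa using h
          exact ⟨⟨hedge e heT, hnotbr e heT⟩, heT⟩
      rw [this]
      have d1 : s(x,y) ≠ s(y,z) := by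
        intro h
        rcases Sym2.eq_iff.1 h with ⟨h1, h2⟩ | ⟨h1, h2⟩
        · exact hxy.ne h1
        · exact hxz h1
      have d2 : s(x,y) ≠ s(z,x) := by
        intro h
        rcases Sym2.eq_iff.1 h with ⟨h1, h2⟩ | ⟨h1, h2⟩
        · exact hxz h1
        · exact hyz.ne h2
      have d3 : s(y,z) ≠ s(z,x) := by
        intro h
        rcases Sym2.eq_iff.1 h with ⟨h1, h2⟩ | ⟨h1, h2⟩
        · exact hyz.ne h1
        · exact hxy.ne' h1
      rw [Finset.card_insert_of_notMem (by simp [d1, d2]),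
        Finset.card_insert_of_notMem (by simp [d3]), Finset.card_singleton]
    rw [Finset.sum_congr rfl h2, Finset.sum_const, hnum, smul_eq_mul, mul_comm]
  omega
theorem stmt_17 [Fintype V] (G : SimpleGraph V) (hG : IsCactus G)
    (hlen : ∀ (v : V) (c : G.Walk v v), c.IsCycle → c.length = 3)
    (hn : Fintype.card V = 2 * numCycles G + numCutEdges G + 1) :
    PI G = (Fintype.card V - 1) * (Fintype.card V - 2) - 2 * numCycles G := by
  classical
  set n := Fintype.card V with hn'
  set t := numCycles G with ht
  set m := numCutEdges G with hm
  have hE : G.edgeFinset.card = m + 3 * t := edge_count hG hlen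
  have term : ∀ e ∈ G.edgeFinset, PIedge G e +
      (Finset.univ.filter fun w => w ∉ e ∧ eqd G w e).card = n - 2 := by
    intro e he
    induction e with
    | h a b => exact edge_contrib ((SimpleGraph.mem_edgeSet G).1
        (SimpleGraph.mem_edgeFinset.1 he))
  have hPI : PI G + ∑ e ∈ G.edgeFinset,
      (Finset.univ.filter fun w => w ∉ e ∧ eqd G w e).card
      = G.edgeFinset.card * (n - 2) := by
    rw [PI, ← Finset.sum_add_distrib, Finset.sum_congr rfl term, Finset.sum_const,
      smul_eq_mul]
  have hsum : ∑ e ∈ G.edgeFinset,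
      (Finset.univ.filter fun w => w ∉ e ∧ eqd G w e).card = n * t := by
    rw [dc G.edgeFinset Finset.univ (fun e w => w ∉ e ∧ eqd G w e)]
    rw [Finset.sum_congr rfl (fun w _ => count_w hG hlen w), Finset.sum_const,
      smul_eq_mul, Finset.card_univ]
  rw [hsum, hE] at hPI
  by_cases h0 : 2 * t + m = 0
  · have ht0 : t = 0 := by omega
    have hm0 : m = 0 := by omega
    have hn1 : n = 1 := by omega
    rw [ht0, hm0, hn1] at hPI
    norm_num at hPI
    rw [ht0, hn1, hPI]
  · have h2 : 2 ≤ n := by omega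
    suffices h : PI G + 2 * t = (n - 1) * (n - 2) by omega
    zify [show 1 ≤ n by omega, h2] at hPI ⊢
    have hnz : (n : ℤ) = 2 * t + m + 1 := by exact_mod_cast hn
    linear_combination hPI + (2 - (n:ℤ)) * hnz
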